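/- Let C ⊆ E be a convex set, A ⊆ E an affine subspace, and x ∈ C ∩ A. If F(C,x) is an exposed face of C, then F(C∩A,x) is an exposed face of C ∩ A. -/

import Mathlib

open scoped Pointwise RealInnerProductSpace

variable {E : Type*} [NormedAddCommGroup E] [InnerProductSpace ℝ E] [FiniteDimensional ℝ E]

/-- `F` is a face of the convex set `C`: a convex subset of `C` such that whenever an open
segment between two points of `C` meets `F`, both endpoints belong to `F`. -/
def IsFace (C F : Set E) : Prop :=
  Convex ℝ F ∧ F ⊆ C ∧
    ∀ x ∈ C, ∀ y ∈ C, (openSegment ℝ x y ∩ F).Nonempty → x ∈ F ∧ y ∈ F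

/-- The exposed face `F⊥(C,u)` of `C` by the vector `u`: the points of `C` where `⟨u,·⟩`
attains its supremum over `C`. -/
def expFace (C : Set E) (u : E) : Set E :=
  {x ∈ C | ∀ y ∈ C, ⟪u, y⟫ ≤ ⟪u, x⟫}

/-- `F` is an exposed face of `C`: either `∅`, or `C`, or `F⊥(C,u)` for some nonzero `u`. -/
def IsExpFace (C F : Set E) : Prop :=
  F = ∅ ∨ F = C ∨ ∃ u : E, u ≠ 0 ∧ F = expFace C u

/-- The normal cone `N(C,x)` of `C` at the point `x`. -/
def normalCone (C : Set E) (x : E) : Set E :=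
  {u | ∀ y ∈ C, ⟪u, y - x⟫ ≤ 0}

/-- The normal cone `N(C,F)` of `C` at a subset `F`; for a nonempty convex `F ⊆ C` it agrees
with `normalCone C x` for any `x` in the relative interior of `F` (all these coincide), and
for `F = ∅` it is all of `E`. -/
def normalConeOf (C F : Set E) : Set E :=
  ⋂ x ∈ intrinsicInterior ℝ F, normalCone C x

/-- `N` is a normal cone of `C`: the normal cone of some face of `C`. -/
def IsNormalCone (C N : Set E) : Prop :=
  ∃ F, IsFace C F ∧ N = normalConeOf C F

/-- `T` is a touching cone of `C`: a nonempty face of a normal cone of `C`. -/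
def IsTouchingCone (C T : Set E) : Prop :=
  T.Nonempty ∧ ∃ N, IsNormalCone C N ∧ IsFace N T

/-- The positive hull of a set: all finite nonnegative combinations (`posHull ∅ = {0}`). -/
def posHull (S : Set E) : Set E :=
  {x | ∃ (k : ℕ) (c : Fin k → ℝ) (s : Fin k → E),
    (∀ i, 0 ≤ c i) ∧ (∀ i, s i ∈ S) ∧ x = ∑ i, c i • s i}

/-- A vector `u` is sharp normal for `C` if every `x ∈ ri(F⊥(C,u))` satisfies
`u ∈ ri(N(C,x))`. -/
def SharpNormal (C : Set E) (u : E) : Prop :=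
  ∀ x ∈ intrinsicInterior ℝ (expFace C u), u ∈ intrinsicInterior ℝ (normalCone C x)

/-- A point `x` is sharp exposed in `C` if every nonzero `u ∈ ri(N(C,x))` satisfies
`x ∈ ri(F⊥(C,u))`. -/
def SharpExposed (C : Set E) (x : E) : Prop :=
  ∀ u ∈ intrinsicInterior ℝ (normalCone C x), u ≠ 0 → x ∈ intrinsicInterior ℝ (expFace C u)

/-- The smallest exposed face of `C` containing `F`: the intersection of all exposed faces
of `C` containing `F`. -/
def supExp (C F : Set E) : Set E :=
  ⋂₀ {G | IsExpFace C G ∧ F ⊆ G}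

/-- The polar body of `K`. -/
def polarBody (K : Set E) : Set E := {u | ∀ y ∈ K, ⟪u, y⟫ ≤ 1}

/-- For convex `C`, an affine subspace `A`, and `x ∈ C ∩ A`: if the face
`F(C,x)` of `C` with `x` in its relative interior is an exposed face of `C`, then the face
`F(C∩A,x)` of `C ∩ A` with `x` in its relative interior is an exposed face of `C ∩ A`. -/
theorem extend_mem' (F : Set E) {x y : E} (hx : x ∈ intrinsicInterior ℝ F) (hy : y ∈ F) :
    ∃ z ∈ F, x ∈ openSegment ℝ y z := by
  obtain ⟨x', hx', rfl⟩ := mem_intrinsicInterior.1 hx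
  haveI : Nonempty (affineSpan ℝ F) := ⟨x'⟩
  set y' : affineSpan ℝ F := ⟨y, subset_affineSpan ℝ F hy⟩
  have hcont : Continuous (fun t : ℝ => AffineMap.lineMap y' x' t) := by
    simp only [AffineMap.lineMap_apply]
    exact (continuous_id.smul (continuous_const (y := x' -ᵥ y'))).vadd continuous_const
  have hopen : IsOpen ((fun t : ℝ => AffineMap.lineMap y' x' t) ⁻¹'
      (interior ((↑) ⁻¹' F : Set (affineSpan ℝ F)))) := hcont.isOpen_preimage _ isOpen_interior
  have h1 : (1:ℝ) ∈ (fun t : ℝ => AffineMap.lineMap y' x' t) ⁻¹'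
      (interior ((↑) ⁻¹' F : Set (affineSpan ℝ F))) := by
    simpa [AffineMap.lineMap_apply_one] using hx'
  obtain ⟨ε, hε, hball⟩ := Metric.isOpen_iff.1 hopen 1 h1
  set t : ℝ := 1 + ε / 2 with ht
  have htmem : t ∈ Metric.ball (1:ℝ) ε := by
    rw [Metric.mem_ball, Real.dist_eq, ht, show 1 + ε/2 - 1 = ε/2 by ring,
      abs_of_pos (by positivity)]
    linarith
  have htpos : (1:ℝ) < t := by rw [ht]; linarith
  have h0 : t ≠ 0 := by linarith
  have hzF : ((AffineMap.lineMap y' x' t : affineSpan ℝ F) : E) ∈ F := by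
    have h2 : AffineMap.lineMap y' x' t ∈ ((↑) ⁻¹' F : Set (affineSpan ℝ F)) :=
      interior_subset (hball htmem)
    exact h2
  refine ⟨_, hzF, ⟨1 - 1/t, 1/t, ?_, by positivity, by ring, ?_⟩⟩
  · rw [sub_pos, one_div]
    exact inv_lt_one_of_one_lt₀ htpos
  · have hz : ((AffineMap.lineMap y' x' t : affineSpan ℝ F) : E) = t • ((x' : E) - y) + y := by
      simp [AffineMap.lineMap_apply, AffineSubspace.coe_vadd, y']
    rw [hz]
    match_scalars <;> field_simp <;> ring

theorem stmt_13 (C : Set E) (hC : Convex ℝ C) (A : AffineSubspace ℝ E) (x : E)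
    (hx : x ∈ C ∩ (A : Set E))
    (F : Set E) (hF : IsFace C F) (hxF : x ∈ intrinsicInterior ℝ F)
    (hFexp : IsExpFace C F)
    (G : Set E) (hG : IsFace (C ∩ (A : Set E)) G) (hxG : x ∈ intrinsicInterior ℝ G) :
    IsExpFace (C ∩ (A : Set E)) G := by
  obtain ⟨hxC, hxA⟩ := hx
  have hxF' : x ∈ F := intrinsicInterior_subset hxF
  have hxG' : x ∈ G := intrinsicInterior_subset hxG
  -- G = F ∩ A
  have hGF : G = F ∩ (A : Set E) := by
    apply Set.Subset.antisymm
    · intro y hy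
      obtain ⟨z, hzG, hseg⟩ := extend_mem' G hxG hy
      refine ⟨(hF.2.2 y (hG.2.1 hy).1 z (hG.2.1 hzG).1 ⟨x, hseg, hxF'⟩).1, (hG.2.1 hy).2⟩
    · rintro y ⟨hyF, hyA⟩
      obtain ⟨z, hzF, hseg⟩ := extend_mem' F hxF hyF
      obtain ⟨a, b, ha, hb, hab, hxe⟩ := hseg
      have hzA : z ∈ (A : Set E) := by
        have : z = (1/b) • (x -ᵥ y) +ᵥ y := by
          have hb1 : a = 1 - b := by linarith
          have hb0 : b ≠ 0 := ne_of_gt hb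
          rw [vsub_eq_sub, vadd_eq_add, ← hxe, hb1]
          match_scalars <;> field_simp <;> ring
        rw [this]
        exact A.smul_vsub_vadd_mem _ hxA hyA hyA
      exact (hG.2.2 y ⟨hF.2.1 hyF, hyA⟩ z ⟨hF.2.1 hzF, hzA⟩ ⟨x, ⟨a, b, ha, hb, hab, hxe⟩, hxG'⟩).1
  rcases hFexp with h | h | ⟨u, hu, h⟩
  · rw [h] at hxF
    simp [intrinsicInterior_empty] at hxF
  · exact Or.inr (Or.inl (by rw [hGF, h]))
  · refine Or.inr (Or.inr ⟨u, hu, ?_⟩)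
    rw [hGF]
    ext y
    constructor
    · rintro ⟨hyF, hyA⟩
      rw [h] at hyF
      exact ⟨⟨hyF.1, hyA⟩, fun z hz => hyF.2 z hz.1⟩
    · rintro ⟨⟨hyC, hyA⟩, hmax⟩
      rw [h] at hxF'
      refine ⟨?_, hyA⟩
      rw [h]
      exact ⟨hyC, fun z hz => le_trans (hxF'.2 z hz) (hmax x ⟨hxC, hxA⟩)⟩
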